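/- Let Delta_1,...,Delta_n and Delta_0 = {p} be as follows: Delta_1,...,Delta_n are linearly independent segments with endpoints in a full-rank lattice L of Z^n and p is any point of R^n. For J a subset of {1,...,n} let Delta_{ {0} ∪ J } = p + sum_{j in J} Delta_j. Then sum over J of (-1)^{|J|} * natural(Delta_{ {0} ∪ J }) = sum over J of (-1)^{n-|J|} * #(Delta_{ {0} ∪ J } ∩ L) = #((hat(Delta_1)+...+hat(Delta_n)+p) ∩ L), where natural(B) = (-1)^{dim B} #(relint(B) ∩ L) and hat(Delta_j) is Delta_j with one chosen endpoint removed. -/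

import Mathlib

open scoped Pointwise
open MeasureTheory

/-- A polytope: the convex hull of a nonempty finite set of points. -/
def IsPolytope {V : Type*} [AddCommGroup V] [Module ℝ V] (P : Set V) : Prop :=
  ∃ s : Finset V, s.Nonempty ∧ P = convexHull ℝ (s : Set V)

/-- The dimension of (the affine span of) a subset of a real vector space. -/
noncomputable def polyDim {V : Type*} [AddCommGroup V] [Module ℝ V] (P : Set V) : ℕ :=
  Module.finrank ℝ (affineSpan ℝ P).direction

/-- `natural(B) = (-1)^{dim B} · #(relint(B) ∩ L)` for a lattice `L`. -/
noncomputable def latNatural {n : ℕ} (L : AddSubgroup (Fin n → ℝ)) (B : Set (Fin n → ℝ)) : ℤ :=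
  (-1) ^ polyDim B * (intrinsicInterior ℝ B ∩ (L : Set (Fin n → ℝ))).ncard

section Aux

open Set

attribute [local instance] AffineSubspace.toNormedAddTorsor AffineSubspace.nonempty_map

theorem image_intrinsicInterior_of_injective {ι κ : Type*} [Fintype ι] [Fintype κ]
    (φ : (ι → ℝ) →ᵃ[ℝ] (κ → ℝ)) (hφ : Function.Injective φ)
    (s : Set (ι → ℝ)) : intrinsicInterior ℝ (φ '' s) = φ '' intrinsicInterior ℝ s := by
  obtain rfl | hs := s.eq_empty_or_nonempty
  · simp
  haveI : Nonempty s := hs.to_subtype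
  let f := AffineEquiv.toHomeomorphOfFiniteDimensional (E := (affineSpan ℝ s).direction)
    (F := ((affineSpan ℝ s).map φ).direction) (PE := affineSpan ℝ s) (PF := (affineSpan ℝ s).map φ)
    ((affineSpan ℝ s).equivMapOfInjective φ hφ)
  have h : (φ : (ι → ℝ) → (κ → ℝ)) ∘ (↑) ∘ ⇑f.symm = (↑) := by
    funext x
    exact congr_arg Subtype.val (((affineSpan ℝ s).equivMapOfInjective φ hφ).apply_symm_apply x)
  rw [intrinsicInterior, intrinsicInterior, ← AffineSubspace.map_span φ s, ← h,
    ← Function.comp_assoc, image_comp, image_comp, f.symm.image_interior, f.image_symm,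
    ← preimage_comp, Function.comp_assoc, f.symm_comp_self, Function.comp_id, preimage_comp,
    hφ.preimage_image]

theorem intrinsicInterior_eq_interior_of_affineSpan_top {ι : Type*} [Fintype ι]
    {s : Set (ι → ℝ)}
    (h : affineSpan ℝ s = ⊤) : intrinsicInterior ℝ s = interior s := by
  refine Subset.antisymm ?_ interior_subset_intrinsicInterior
  have hopen : IsOpenMap ((↑) : (affineSpan ℝ s : Set (ι → ℝ)) → (ι → ℝ)) := by
    have h2 : IsOpen (affineSpan ℝ s : Set (ι → ℝ)) := by
      rw [h]; simpa using isOpen_univ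
    exact h2.isOpenMap_subtype_val
  exact interior_maximal ((image_mono interior_subset).trans (image_preimage_subset _ _))
    (hopen _ isOpen_interior)

end Aux

section Maps

open Set

variable {ι : Type*} [Fintype ι] {m : ℕ}

/-- The linear map `t ↦ ∑ i, t i • w i`. -/
noncomputable def sumLin (w : ι → (Fin m → ℝ)) : (ι → ℝ) →ₗ[ℝ] (Fin m → ℝ) where
  toFun t := ∑ i, t i • w i
  map_add' s t := by simp [add_smul, Finset.sum_add_distrib]
  map_smul' r t := by simp [Finset.smul_sum, smul_smul]

theorem sumLin_apply (w : ι → (Fin m → ℝ)) (t : ι → ℝ) : sumLin w t = ∑ i, t i • w i := rfl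

theorem sumLin_injective {w : ι → (Fin m → ℝ)} (hw : LinearIndependent ℝ w) :
    Function.Injective (sumLin w) := by
  rw [← LinearMap.ker_eq_bot, LinearMap.ker_eq_bot']
  intro t ht
  funext i
  exact Fintype.linearIndependent_iff.mp hw t ht i

/-- The affine map `t ↦ c + ∑ i, t i • w i`. -/
noncomputable def affSum (c : Fin m → ℝ) (w : ι → (Fin m → ℝ)) : (ι → ℝ) →ᵃ[ℝ] (Fin m → ℝ) where
  toFun t := c + ∑ i, t i • w i
  linear := sumLin w
  map_vadd' t s := by
    simp only [vadd_eq_add, sumLin_apply, Pi.add_apply, add_smul, Finset.sum_add_distrib]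
    abel

theorem affSum_apply (c : Fin m → ℝ) (w : ι → (Fin m → ℝ)) (t : ι → ℝ) :
    affSum c w t = c + ∑ i, t i • w i := rfl

theorem affSum_linear (c : Fin m → ℝ) (w : ι → (Fin m → ℝ)) :
    (affSum c w).linear = sumLin w := rfl

theorem affSum_injective (c : Fin m → ℝ) {w : ι → (Fin m → ℝ)} (hw : LinearIndependent ℝ w) :
    Function.Injective (affSum c w) := by
  intro s t hst
  have : sumLin w s = sumLin w t := by
    have := hst
    simp only [affSum_apply] at this
    simpa [sumLin_apply] using add_left_cancel this
  exact sumLin_injective hw this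

/-- Extension by zero of a function on the subtype of a finset. -/
noncomputable def extZero (J : Finset (Fin m)) : ({x : Fin m // x ∈ J} → ℝ) →ₗ[ℝ] (Fin m → ℝ) where
  toFun t := fun j => if h : j ∈ J then t ⟨j, h⟩ else 0
  map_add' s t := by funext j; by_cases h : j ∈ J <;> simp [h]
  map_smul' r t := by funext j; by_cases h : j ∈ J <;> simp [h]

theorem extZero_injective (J : Finset (Fin m)) : Function.Injective (extZero J) := by
  intro s t hst
  funext i
  have := congrFun hst i.1
  simpa [extZero, i.2] using this

theorem extZero_image_pi (J : Finset (Fin m)) (A : Set ℝ) :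
    extZero J '' (univ.pi fun _ => A) =
      {θ : Fin m → ℝ | (∀ j ∈ J, θ j ∈ A) ∧ ∀ j ∉ J, θ j = 0} := by
  ext θ
  constructor
  · rintro ⟨t, ht, rfl⟩
    refine ⟨fun j hj => ?_, fun j hj => ?_⟩
    · simpa [extZero, hj] using ht ⟨j, hj⟩ (mem_univ _)
    · simp [extZero, hj]
  · rintro ⟨h1, h2⟩
    refine ⟨fun i => θ i.1, fun i _ => h1 i.1 i.2, ?_⟩
    funext j
    by_cases h : j ∈ J
    · simp [extZero, h]
    · simp [extZero, h, (h2 j h).symm]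

end Maps

section Cube

open Set

theorem affineSpan_pi_Icc_top {ι : Type*} [Fintype ι] :
    affineSpan ℝ ((Set.univ.pi fun _ : ι => Set.Icc (0:ℝ) 1) : Set (ι → ℝ)) = ⊤ := by
  have hne : ((fun _ => (1:ℝ)/2) : ι → ℝ) ∈
      interior (Set.univ.pi fun _ : ι => Set.Icc (0:ℝ) 1) := by
    rw [interior_pi_set Set.finite_univ]
    intro j _
    rw [interior_Icc]
    constructor <;> norm_num
  exact top_unique ((isOpen_interior.affineSpan_eq_top ⟨_, hne⟩) ▸
    affineSpan_mono ℝ interior_subset)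

theorem intrinsicInterior_pi_Icc {ι : Type*} [Fintype ι] :
    intrinsicInterior ℝ ((Set.univ.pi fun _ : ι => Set.Icc (0:ℝ) 1) : Set (ι → ℝ)) =
      Set.univ.pi fun _ => Set.Ioo (0:ℝ) 1 := by
  rw [intrinsicInterior_eq_interior_of_affineSpan_top affineSpan_pi_Icc_top]
  rw [interior_pi_set Set.finite_univ]
  ext x
  simp [Set.mem_pi, interior_Icc]

end Cube

section Counting

open Set

/-- Integer points in a bounded region form a finite set. -/
theorem finite_int_points_of_bounded {m : ℕ} (K : Set (Fin m → ℝ)) (R : ℝ)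
    (hK : ∀ x ∈ K, ∀ j, |x j| ≤ R) (hint : ∀ x ∈ K, ∀ j, ∃ k : ℤ, x j = (k : ℝ)) :
    K.Finite := by
  have hfin : (Set.pi (univ : Set (Fin m)) fun _ => Set.Icc (-⌈R⌉) ⌈R⌉).Finite :=
    Set.Finite.pi fun _ => Set.finite_Icc _ _
  refine Set.Finite.of_finite_image (f := fun x j => ⌊x j⌋) (hfin.subset ?_) ?_
  · rintro q ⟨x, hx, rfl⟩
    rw [Set.mem_pi]
    intro j _
    obtain ⟨k, hk⟩ := hint x hx j
    have h1 : |x j| ≤ R := hK x hx j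
    rw [hk] at h1
    have h2 : |(k : ℝ)| ≤ (⌈R⌉ : ℝ) := h1.trans (Int.le_ceil R)
    rw [← Int.cast_abs, Int.cast_le] at h2
    have h3 := abs_le.mp h2
    show ⌊x j⌋ ∈ Set.Icc (-⌈R⌉) ⌈R⌉
    rw [hk, Int.floor_intCast]
    exact ⟨h3.1, h3.2⟩
  · intro x hx y hy hxy
    funext j
    obtain ⟨k, hk⟩ := hint x hx j
    obtain ⟨l, hl⟩ := hint y hy j
    have := congrFun hxy j
    simp only [hk, hl, Int.floor_intCast] at this ⊢
    exact_mod_cast this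

/-- Möbius-type identity: summing `(-1)^{n-|J|}` over supersets of `σ`. -/
theorem mobius_sum {m : ℕ} (σ : Finset (Fin m)) :
    ∑ J ∈ (Finset.univ : Finset (Fin m)).powerset, (-1 : ℤ) ^ (m - J.card) *
      (if σ ⊆ J then 1 else 0) = if σ = Finset.univ then 1 else 0 := by
  classical
  have hre : ∑ J ∈ (Finset.univ : Finset (Fin m)).powerset, (-1 : ℤ) ^ (m - J.card) *
      (if σ ⊆ J then 1 else 0) =
      ∑ K ∈ (Finset.univ : Finset (Fin m)).powerset, (-1 : ℤ) ^ K.card *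
      (if K ⊆ σᶜ then 1 else 0) := by
    refine Finset.sum_nbij' (fun J => Jᶜ) (fun K => Kᶜ) ?_ ?_ ?_ ?_ ?_
    · intro J _; simp
    · intro K _; simp
    · intro J _; simp
    · intro K _; simp
    · intro J _
      congr 1
      · congr 1
        rw [Finset.card_compl]
        have : J.card ≤ m := by simpa using Finset.card_le_univ J
        simp [Nat.sub_sub_self this]
      · congr 1
        simp only [eq_iff_iff]
        constructor
        · intro h
          intro x hx
          simp only [Finset.mem_compl] at hx ⊢
          exact fun hs => hx (h hs)
        · intro h
          intro x hx
          by_contra hc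
          have : x ∈ Jᶜ := Finset.mem_compl.mpr hc
          exact (Finset.mem_compl.mp (h this)) hx
  rw [hre]
  have h2 : ∑ K ∈ (Finset.univ : Finset (Fin m)).powerset, (-1 : ℤ) ^ K.card *
      (if K ⊆ σᶜ then 1 else 0) = ∑ K ∈ σᶜ.powerset, (-1 : ℤ) ^ K.card := by
    rw [← Finset.sum_subset (Finset.powerset_mono.mpr (Finset.subset_univ σᶜ))]
    · refine Finset.sum_congr rfl fun K hK => ?_
      rw [Finset.mem_powerset] at hK
      simp [hK]
    · intro K _ hK
      rw [Finset.mem_powerset] at hK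
      simp [hK]
  rw [h2, Finset.sum_powerset_neg_one_pow_card]
  congr 1
  simp only [eq_iff_iff]
  constructor
  · intro h
    rwa [Finset.compl_eq_empty_iff] at h
  · intro h
    rwa [Finset.compl_eq_empty_iff]

end Counting

/-- **Step (B) of the proof of Proposition 3.2.** Let `Δ_j = [a_j, a_j+v_j]`
be linearly independent segments with endpoints in a full-rank lattice `L ⊆ ℤ^n` and
`Δ_0 = {p}` a point.  Then
`∑_J (-1)^{|J|} natural(p + Δ_J) = ∑_J (-1)^{n-|J|} #((p + Δ_J) ∩ L)
  = #((hatΔ_1 + ⋯ + hatΔ_n + p) ∩ L)`,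
where `hatΔ_j = Δ_j \ {a_j}` and `natural(B) = (-1)^{dim B} #(relint(B) ∩ L)`. -/
theorem segments_alternating_sum_halfopen_count (n : ℕ) (hn : 0 < n)
    (b : Fin n → (Fin n → ℝ))
    (hb_int : ∀ i j, ∃ m : ℤ, b i j = (m : ℝ))
    (hb_indep : LinearIndependent ℝ b)
    (L : AddSubgroup (Fin n → ℝ)) (hL : L = AddSubgroup.closure (Set.range b))
    (a v : Fin n → (Fin n → ℝ))
    (ha : ∀ j, a j ∈ L) (hav : ∀ j, a j + v j ∈ L)
    (hv_indep : LinearIndependent ℝ v)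
    (p : Fin n → ℝ) :
    (∑ J ∈ (Finset.univ : Finset (Fin n)).powerset, (-1 : ℤ) ^ J.card *
        latNatural L (({p} : Set (Fin n → ℝ)) + ∑ j ∈ J, segment ℝ (a j) (a j + v j)) =
      ∑ J ∈ (Finset.univ : Finset (Fin n)).powerset, (-1 : ℤ) ^ (n - J.card) *
        (((({p} : Set (Fin n → ℝ)) + ∑ j ∈ J, segment ℝ (a j) (a j + v j)) ∩
          (L : Set (Fin n → ℝ))).ncard : ℤ)) ∧
    (∑ J ∈ (Finset.univ : Finset (Fin n)).powerset, (-1 : ℤ) ^ (n - J.card) *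
        (((({p} : Set (Fin n → ℝ)) + ∑ j ∈ J, segment ℝ (a j) (a j + v j)) ∩
          (L : Set (Fin n → ℝ))).ncard : ℤ) =
      ((((∑ j, (segment ℝ (a j) (a j + v j) \ {a j})) + ({p} : Set (Fin n → ℝ))) ∩
        (L : Set (Fin n → ℝ))).ncard : ℤ)) := by
  classical
  -- the normalized affine map `θ ↦ p + ∑ θ j • v j`
  set Φ : (Fin n → ℝ) →ᵃ[ℝ] (Fin n → ℝ) := affSum p v with hΦdef
  have hΦinj : Function.Injective Φ := affSum_injective p hv_indep
  set T : Set (Fin n → ℝ) := ⇑Φ ⁻¹' (L : Set (Fin n → ℝ)) with hTdef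
  have hvL : ∀ j, v j ∈ L := fun j => by simpa using L.sub_mem (hav j) (ha j)
  -- coordinate model sets
  set C : Finset (Fin n) → Set (Fin n → ℝ) :=
    fun J => {θ | (∀ j ∈ J, θ j ∈ Set.Icc (0:ℝ) 1) ∧ ∀ j ∉ J, θ j = 0} with hCdef
  set Co : Finset (Fin n) → Set (Fin n → ℝ) :=
    fun J => {θ | (∀ j ∈ J, θ j ∈ Set.Ioo (0:ℝ) 1) ∧ ∀ j ∉ J, θ j = 0} with hCodef
  set D : Set (Fin n → ℝ) := {θ | ∀ j, θ j ∈ Set.Ioc (0:ℝ) 1} with hDdef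
  -- auxiliary sum computation
  have hsum : ∀ (J : Finset (Fin n)) (θ : Fin n → ℝ), (∀ j ∉ J, θ j = 0) →
      affSum (p + ∑ j ∈ J, a j) v θ = p + ∑ j ∈ J, (a j + θ j • v j) := by
    intro J θ h0
    rw [affSum_apply,
      ← Finset.sum_subset (Finset.subset_univ J) (fun j _ hj => by rw [h0 j hj, zero_smul]),
      Finset.sum_add_distrib, add_assoc]
  -- the parallelepiped as an image
  have hB : ∀ J : Finset (Fin n),
      ({p} : Set (Fin n → ℝ)) + ∑ j ∈ J, segment ℝ (a j) (a j + v j)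
        = affSum (p + ∑ j ∈ J, a j) v '' C J := by
    intro J
    ext x
    constructor
    · intro hx
      rw [Set.mem_add] at hx
      obtain ⟨y, hy, z, hz, rfl⟩ := hx
      rw [Set.mem_singleton_iff] at hy
      subst hy
      rw [Set.mem_finset_sum] at hz
      obtain ⟨g, hg, rfl⟩ := hz
      have hseg : ∀ j ∈ J, ∃ t, t ∈ Set.Icc (0:ℝ) 1 ∧ a j + t • v j = g j := by
        intro j hj
        have h1 := hg hj
        rw [segment_eq_image'] at h1
        obtain ⟨t, ht, hte⟩ := h1
        exact ⟨t, ht, by simpa [add_sub_cancel_left] using hte⟩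
      choose θf hθf hgf using hseg
      refine ⟨fun j => if h : j ∈ J then θf j h else 0, ⟨fun j hj => ?_, fun j hj => ?_⟩, ?_⟩
      · simpa [hj] using hθf j hj
      · simp [hj]
      · rw [hsum J _ (fun j hj => by simp [hj])]
        congr 1
        refine Finset.sum_congr rfl fun j hj => ?_
        rw [dif_pos hj, hgf j hj]
    · rintro ⟨θ, ⟨hθ1, hθ2⟩, rfl⟩
      rw [hsum J θ hθ2]
      refine Set.add_mem_add (Set.mem_singleton p) ?_
      refine Set.finset_sum_mem_finset_sum J _ _ fun j hj => ?_
      rw [segment_eq_image']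
      exact ⟨θ j, hθ1 j hj, by simp [add_sub_cancel_left]⟩
  -- the cube in `↥J → ℝ` and its properties
  have hCimg : ∀ J : Finset (Fin n),
      C J = ⇑(extZero J).toAffineMap '' (Set.univ.pi fun _ => Set.Icc (0:ℝ) 1) := by
    intro J
    rw [LinearMap.coe_toAffineMap, extZero_image_pi]
  have hIobj : ∀ J : Finset (Fin n),
      intrinsicInterior ℝ (({p} : Set (Fin n → ℝ)) + ∑ j ∈ J, segment ℝ (a j) (a j + v j))
        = affSum (p + ∑ j ∈ J, a j) v '' Co J := by
    intro J
    rw [hB J, image_intrinsicInterior_of_injective _ (affSum_injective _ hv_indep)]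
    congr 1
    have hext : Function.Injective ⇑(extZero J).toAffineMap := by
      rw [LinearMap.coe_toAffineMap]
      exact extZero_injective J
    rw [hCimg J, image_intrinsicInterior_of_injective _ hext, intrinsicInterior_pi_Icc,
      LinearMap.coe_toAffineMap, extZero_image_pi]
  have hDim : ∀ J : Finset (Fin n),
      polyDim (({p} : Set (Fin n → ℝ)) + ∑ j ∈ J, segment ℝ (a j) (a j + v j)) = J.card := by
    intro J
    have hinj : Function.Injective
        ((affSum (p + ∑ j ∈ J, a j) v).linear ∘ₗ (extZero J).toAffineMap.linear) := by
      have h1 : Function.Injective (affSum (p + ∑ j ∈ J, a j) v).linear := by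
        rw [affSum_linear]
        exact sumLin_injective hv_indep
      exact h1.comp (extZero_injective J)
    simp only [polyDim]
    rw [hB J, ← AffineSubspace.map_span, AffineSubspace.map_direction,
      hCimg J, ← AffineSubspace.map_span, AffineSubspace.map_direction,
      affineSpan_pi_Icc_top, AffineSubspace.direction_top, Submodule.map_top,
      ← LinearMap.range_comp, LinearMap.finrank_range_of_inj hinj, Module.finrank_pi,
      Fintype.card_coe]
  have hH : (∑ j, (segment ℝ (a j) (a j + v j) \ {a j})) + ({p} : Set (Fin n → ℝ))
      = affSum (p + ∑ j, a j) v '' D := by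
    ext x
    constructor
    · intro hx
      rw [Set.mem_add] at hx
      obtain ⟨y, hy, z, hz, rfl⟩ := hx
      rw [Set.mem_singleton_iff] at hz
      subst hz
      rw [Set.mem_finset_sum] at hy
      obtain ⟨g, hg, rfl⟩ := hy
      have hseg : ∀ j, ∃ t, t ∈ Set.Ioc (0:ℝ) 1 ∧ a j + t • v j = g j := by
        intro j
        have h1 := hg (Finset.mem_univ j)
        obtain ⟨h2, h3⟩ := h1
        rw [segment_eq_image'] at h2
        obtain ⟨t, ht, hte⟩ := h2
        rw [add_sub_cancel_left] at hte
        refine ⟨t, ⟨?_, ht.2⟩, hte⟩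
        refine lt_of_le_of_ne ht.1 (Ne.symm fun h0 => ?_)
        apply h3
        rw [← hte]
        simp [← h0]
      choose θf hθf hgf using hseg
      refine ⟨θf, fun j => hθf j, ?_⟩
      rw [hsum Finset.univ θf (fun j hj => absurd (Finset.mem_univ j) hj)]
      rw [Finset.sum_congr rfl fun j _ => hgf j, add_comm]
    · rintro ⟨θ, hθ, rfl⟩
      rw [hsum Finset.univ θ (fun j hj => absurd (Finset.mem_univ j) hj)]
      have hcomm : p + ∑ j, (a j + θ j • v j) = (∑ j, (a j + θ j • v j)) + p :=
        add_comm _ _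
      rw [hcomm]
      refine Set.add_mem_add ?_ (Set.mem_singleton p)
      refine Set.finset_sum_mem_finset_sum Finset.univ _ _ fun j _ => ?_
      constructor
      · rw [segment_eq_image']
        exact ⟨θ j, ⟨(hθ j).1.le, (hθ j).2⟩, by simp [add_sub_cancel_left]⟩
      · intro hc
        rw [Set.mem_singleton_iff] at hc
        have h0 : θ j • v j = 0 := by
          have := hc
          rwa [add_eq_left] at this
        rcases smul_eq_zero.mp h0 with h | h
        · exact (hθ j).1.ne' h
        · exact hv_indep.ne_zero j h
  -- counting via the coordinate model
  have hcount : ∀ (c : Fin n → ℝ), c ∈ L → ∀ A : Set (Fin n → ℝ),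
      ((affSum (p + c) v '' A) ∩ (L : Set (Fin n → ℝ))).ncard = (A ∩ T).ncard := by
    intro c hc A
    have hcomp : ⇑(affSum (p + c) v) = (fun x => c + x) ∘ ⇑Φ := by
      funext t
      simp only [Function.comp_apply, hΦdef, affSum_apply]
      abel
    have htrans : ((fun x => c + x) '' (⇑Φ '' A)) ∩ (L : Set (Fin n → ℝ))
        = (fun x => c + x) '' ((⇑Φ '' A) ∩ (L : Set (Fin n → ℝ))) := by
      ext y
      constructor
      · rintro ⟨⟨x, hx, rfl⟩, hyL⟩
        exact ⟨x, ⟨hx, by simpa using L.sub_mem hyL hc⟩, rfl⟩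
      · rintro ⟨x, ⟨hx, hxL⟩, rfl⟩
        exact ⟨⟨x, hx, rfl⟩, L.add_mem hc hxL⟩
    rw [hcomp, Set.image_comp, htrans,
      Set.ncard_image_of_injective _ (add_right_injective c),
      ← Set.image_inter_preimage, Set.ncard_image_of_injective _ hΦinj]
  -- finiteness
  have hUfin : ({θ : Fin n → ℝ | (∀ j, θ j ∈ Set.Icc (0:ℝ) 1) ∧ θ ∈ T}).Finite := by
    have hLint : ∀ x ∈ L, ∀ j, ∃ k : ℤ, x j = (k : ℝ) := by
      intro x hx
      rw [hL] at hx
      refine AddSubgroup.closure_induction ?_ ?_ ?_ ?_ hx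
      · rintro y ⟨i, rfl⟩ j
        exact hb_int i j
      · intro j
        exact ⟨0, by simp⟩
      · intro y z _ _ ihy ihz j
        obtain ⟨k, hk⟩ := ihy j
        obtain ⟨l, hl⟩ := ihz j
        exact ⟨k + l, by simp [hk, hl]⟩
      · intro y _ ihy j
        obtain ⟨k, hk⟩ := ihy j
        exact ⟨-k, by simp [hk]⟩
    have hcpt : IsCompact (⇑Φ '' (Set.univ.pi fun _ : Fin n => Set.Icc (0:ℝ) 1)) :=
      (isCompact_univ_pi fun _ => isCompact_Icc).image
        (AffineMap.continuous_of_finiteDimensional Φ)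
    obtain ⟨R, hR⟩ := isBounded_iff_forall_norm_le.mp hcpt.isBounded
    have hfin2 : (⇑Φ '' {θ : Fin n → ℝ | (∀ j, θ j ∈ Set.Icc (0:ℝ) 1) ∧ θ ∈ T}).Finite := by
      refine finite_int_points_of_bounded _ R ?_ ?_
      · rintro x ⟨θ, hθ, rfl⟩ j
        have hx : Φ θ ∈ ⇑Φ '' (Set.univ.pi fun _ : Fin n => Set.Icc (0:ℝ) 1) :=
          ⟨θ, fun j _ => hθ.1 j, rfl⟩
        have h1 : ‖Φ θ‖ ≤ R := hR _ hx
        calc |Φ θ j| = ‖Φ θ j‖ := (Real.norm_eq_abs _).symm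
          _ ≤ ‖Φ θ‖ := norm_le_pi_norm (Φ θ) j
          _ ≤ R := h1
      · rintro x ⟨θ, hθ, rfl⟩
        exact hLint _ hθ.2
    exact Set.Finite.of_finite_image hfin2 hΦinj.injOn
  set S : Finset (Fin n → ℝ) := hUfin.toFinset with hSdef
  have hSmem : ∀ θ, θ ∈ S ↔ (∀ j, θ j ∈ Set.Icc (0:ℝ) 1) ∧ θ ∈ T := by
    intro θ; rw [hSdef, Set.Finite.mem_toFinset]; rfl
  have hCS : ∀ J : Finset (Fin n),
      C J ∩ T = ↑(S.filter fun θ => ∀ j ∉ J, θ j = 0) := by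
    intro J
    ext θ
    simp only [Set.mem_inter_iff, hCdef, Set.mem_setOf_eq, Finset.mem_coe, Finset.mem_filter,
      hSmem]
    constructor
    · rintro ⟨⟨h1, h2⟩, hT⟩
      refine ⟨⟨fun j => ?_, hT⟩, h2⟩
      by_cases h : j ∈ J
      · exact h1 j h
      · rw [h2 j h]; exact ⟨le_refl 0, zero_le_one⟩
    · rintro ⟨⟨h1, hT⟩, h2⟩
      exact ⟨⟨fun j _ => h1 j, h2⟩, hT⟩
  have hCoS : ∀ J : Finset (Fin n),
      Co J ∩ T = ↑(S.filter fun θ => (∀ j, θ j ≠ 1) ∧ ∀ j, (j ∈ J ↔ θ j ≠ 0)) := by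
    intro J
    ext θ
    simp only [Set.mem_inter_iff, hCodef, Set.mem_setOf_eq, Finset.mem_coe, Finset.mem_filter,
      hSmem]
    constructor
    · rintro ⟨⟨h1, h2⟩, hT⟩
      refine ⟨⟨fun j => ?_, hT⟩, fun j => ?_, fun j => ?_⟩
      · by_cases h : j ∈ J
        · exact ⟨(h1 j h).1.le, (h1 j h).2.le⟩
        · rw [h2 j h]; exact ⟨le_refl 0, zero_le_one⟩
      · by_cases h : j ∈ J
        · exact (h1 j h).2.ne
        · rw [h2 j h]; exact zero_ne_one
      · constructor
        · intro hj; exact (h1 j hj).1.ne'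
        · intro hne
          by_contra hc
          exact hne (h2 j hc)
    · rintro ⟨⟨hIcc, hT⟩, hne1, hiff⟩
      refine ⟨⟨fun j hj => ?_, fun j hj => ?_⟩, hT⟩
      · have h0 : θ j ≠ 0 := (hiff j).mp hj
        exact ⟨lt_of_le_of_ne (hIcc j).1 (Ne.symm h0), lt_of_le_of_ne (hIcc j).2 (hne1 j)⟩
      · by_contra hc
        exact hj ((hiff j).mpr hc)
  have hDS : D ∩ T = ↑(S.filter fun θ => ∀ j, θ j ≠ 0) := by
    ext θ
    simp only [Set.mem_inter_iff, hDdef, Set.mem_setOf_eq, Finset.mem_coe, Finset.mem_filter,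
      hSmem]
    constructor
    · rintro ⟨h1, hT⟩
      exact ⟨⟨fun j => ⟨(h1 j).1.le, (h1 j).2⟩, hT⟩, fun j => (h1 j).1.ne'⟩
    · rintro ⟨⟨h1, hT⟩, h2⟩
      exact ⟨fun j => ⟨lt_of_le_of_ne (h1 j).1 (Ne.symm (h2 j)), (h1 j).2⟩, hT⟩
  -- the reflection bijection
  have hTadd : ∀ (θ ε : Fin n → ℝ), θ ∈ T → (∀ j, ε j • v j ∈ L) →
      (fun j => θ j + ε j) ∈ T := by
    intro θ ε hθ hε
    have heq : Φ (fun j => θ j + ε j) = Φ θ + ∑ j, ε j • v j := by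
      simp only [hΦdef, affSum_apply]
      rw [add_assoc]
      congr 1
      rw [← Finset.sum_add_distrib]
      exact Finset.sum_congr rfl fun j _ => by rw [add_smul]
    show Φ _ ∈ (L : Set (Fin n → ℝ))
    rw [heq]
    exact L.add_mem hθ (sum_mem fun j _ => hε j)
  have hbij : (S.filter fun θ => ∀ j, θ j ≠ 1).card = (S.filter fun θ => ∀ j, θ j ≠ 0).card := by
    refine Finset.card_nbij' (fun θ j => if θ j = 0 then 1 else θ j)
      (fun θ j => if θ j = 1 then 0 else θ j) ?_ ?_ ?_ ?_
    · intro θ hθ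
      obtain ⟨hθS, hθ1⟩ := Finset.mem_filter.mp hθ
      obtain ⟨hIcc, hT⟩ := (hSmem θ).mp hθS
      refine Finset.mem_filter.mpr ⟨(hSmem _).mpr ⟨fun j => ?_, ?_⟩, fun j => ?_⟩
      · by_cases h : θ j = 0
        · simp only [h, if_pos rfl]
          exact ⟨zero_le_one, le_refl 1⟩
        · simp only [if_neg h]
          exact hIcc j
      · have h2 : (fun j => if θ j = 0 then (1:ℝ) else θ j)
            = fun j => θ j + (if θ j = 0 then 1 else 0) := by
          funext j
          by_cases h : θ j = 0 <;> simp [h]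
        show (fun j => if θ j = 0 then (1:ℝ) else θ j) ∈ T
        rw [h2]
        refine hTadd θ _ hT fun j => ?_
        by_cases h : θ j = 0
        · simpa [h] using hvL j
        · simpa [h] using L.zero_mem
      · by_cases h : θ j = 0 <;> simp [h]
    · intro θ hθ
      obtain ⟨hθS, hθ0⟩ := Finset.mem_filter.mp hθ
      obtain ⟨hIcc, hT⟩ := (hSmem θ).mp hθS
      refine Finset.mem_filter.mpr ⟨(hSmem _).mpr ⟨fun j => ?_, ?_⟩, fun j => ?_⟩
      · by_cases h : θ j = 1
        · simp only [h, if_pos rfl]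
          exact ⟨le_refl 0, zero_le_one⟩
        · simp only [if_neg h]
          exact hIcc j
      · have h2 : (fun j => if θ j = 1 then (0:ℝ) else θ j)
            = fun j => θ j + (if θ j = 1 then (-1) else 0) := by
          funext j
          by_cases h : θ j = 1 <;> simp [h]
        show (fun j => if θ j = 1 then (0:ℝ) else θ j) ∈ T
        rw [h2]
        refine hTadd θ _ hT fun j => ?_
        by_cases h : θ j = 1
        · simpa [h, neg_smul] using L.neg_mem (hvL j)
        · simpa [h] using L.zero_mem
      · by_cases h : θ j = 1 <;> simp [h]
    · intro θ hθ
      obtain ⟨-, hθ1⟩ := Finset.mem_filter.mp hθ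
      funext j
      by_cases h : θ j = 0
      · simp [h]
      · simp [h, hθ1 j]
    · intro θ hθ
      obtain ⟨-, hθ0⟩ := Finset.mem_filter.mp hθ
      funext j
      by_cases h : θ j = 1
      · simp [h]
      · simp [h, hθ0 j]
  -- counts of the three kinds of sets
  have hNcount : ∀ J : Finset (Fin n),
      (((({p} : Set (Fin n → ℝ)) + ∑ j ∈ J, segment ℝ (a j) (a j + v j)) ∩
        (L : Set (Fin n → ℝ))).ncard : ℤ) = ((S.filter fun θ => ∀ j ∉ J, θ j = 0).card : ℤ) := by
    intro J
    rw [hB J, hcount _ (sum_mem fun j _ => ha j), hCS J, Set.ncard_coe_finset]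
  have hIcount : ∀ J : Finset (Fin n),
      ((intrinsicInterior ℝ (({p} : Set (Fin n → ℝ)) + ∑ j ∈ J, segment ℝ (a j) (a j + v j)) ∩
        (L : Set (Fin n → ℝ))).ncard : ℤ) =
      ((S.filter fun θ => (∀ j, θ j ≠ 1) ∧ ∀ j, (j ∈ J ↔ θ j ≠ 0)).card : ℤ) := by
    intro J
    rw [hIobj J, hcount _ (sum_mem fun j _ => ha j), hCoS J, Set.ncard_coe_finset]
  have hHcount : ((((∑ j, (segment ℝ (a j) (a j + v j) \ {a j})) + ({p} : Set (Fin n → ℝ))) ∩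
      (L : Set (Fin n → ℝ))).ncard : ℤ) = ((S.filter fun θ => ∀ j, θ j ≠ 0).card : ℤ) := by
    rw [hH, hcount _ (sum_mem fun j _ => ha j), hDS, Set.ncard_coe_finset]
  -- the two combinatorial identities
  have hmid : ∑ J ∈ (Finset.univ : Finset (Fin n)).powerset, (-1 : ℤ) ^ (n - J.card) *
      ((S.filter fun θ => ∀ j ∉ J, θ j = 0).card : ℤ)
      = ((S.filter fun θ => ∀ j, θ j ≠ 0).card : ℤ) := by
    have step1 : ∀ J : Finset (Fin n), (-1 : ℤ) ^ (n - J.card) *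
        ((S.filter fun θ => ∀ j ∉ J, θ j = 0).card : ℤ)
        = ∑ θ ∈ S, (-1 : ℤ) ^ (n - J.card) * (if ∀ j ∉ J, θ j = 0 then 1 else 0) := by
      intro J
      rw [← Finset.sum_boole, Finset.mul_sum]
    rw [Finset.sum_congr rfl fun J _ => step1 J, Finset.sum_comm]
    rw [← Finset.sum_boole]
    refine Finset.sum_congr rfl fun θ _ => ?_
    have h1 : ∀ J : Finset (Fin n), (if ∀ j ∉ J, θ j = 0 then (1:ℤ) else 0)
        = (if (Finset.univ.filter fun j => θ j ≠ 0) ⊆ J then 1 else 0) := by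
      intro J
      congr 1
      simp only [eq_iff_iff]
      constructor
      · intro h j hj
        simp only [Finset.mem_filter, Finset.mem_univ, true_and] at hj
        by_contra hc
        exact hj (h j hc)
      · intro h j hj
        by_contra hc
        exact hj (h (Finset.mem_filter.mpr ⟨Finset.mem_univ j, hc⟩))
    rw [Finset.sum_congr rfl fun J _ => by rw [h1 J], mobius_sum]
    congr 1
    simp only [eq_iff_iff, Finset.filter_eq_self]
    constructor
    · intro h j
      exact h j (Finset.mem_univ j)
    · intro h j _
      exact h j
  have hone : ∑ J ∈ (Finset.univ : Finset (Fin n)).powerset,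
      ((S.filter fun θ => (∀ j, θ j ≠ 1) ∧ ∀ j, (j ∈ J ↔ θ j ≠ 0)).card : ℤ)
      = ((S.filter fun θ => ∀ j, θ j ≠ 1).card : ℤ) := by
    have step1 : ∀ J : Finset (Fin n),
        ((S.filter fun θ => (∀ j, θ j ≠ 1) ∧ ∀ j, (j ∈ J ↔ θ j ≠ 0)).card : ℤ)
        = ∑ θ ∈ S, (if (∀ j, θ j ≠ 1) ∧ ∀ j, (j ∈ J ↔ θ j ≠ 0) then 1 else 0) := by
      intro J
      rw [← Finset.sum_boole]
    rw [Finset.sum_congr rfl fun J _ => step1 J, Finset.sum_comm, ← Finset.sum_boole]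
    refine Finset.sum_congr rfl fun θ _ => ?_
    by_cases hq : ∀ j, θ j ≠ 1
    · rw [if_pos hq]
      have h2 : ∀ J ∈ (Finset.univ : Finset (Fin n)).powerset,
          (if (∀ j, θ j ≠ 1) ∧ ∀ j, (j ∈ J ↔ θ j ≠ 0) then (1:ℤ) else 0)
          = if J = Finset.univ.filter (fun j => θ j ≠ 0) then (1:ℤ) else 0 := by
        intro J _
        congr 1
        simp only [eq_iff_iff]
        constructor
        · rintro ⟨-, hiff⟩
          ext j
          simp only [Finset.mem_filter, Finset.mem_univ, true_and]
          exact hiff j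
        · rintro rfl
          refine ⟨hq, fun j => ?_⟩
          simp only [Finset.mem_filter, Finset.mem_univ, true_and]
      rw [Finset.sum_congr rfl h2,
        Finset.sum_ite_eq' (Finset.univ.powerset) (Finset.univ.filter fun j => θ j ≠ 0)
          (fun _ => (1:ℤ))]
      simp
    · rw [if_neg hq]
      have h2 : ∀ J ∈ (Finset.univ : Finset (Fin n)).powerset,
          (if (∀ j, θ j ≠ 1) ∧ ∀ j, (j ∈ J ↔ θ j ≠ 0) then (1:ℤ) else 0) = 0 := by
        intro J _
        rw [if_neg]
        rintro ⟨h, -⟩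
        exact hq h
      rw [Finset.sum_congr rfl h2]
      simp
  have key2 : ∑ J ∈ (Finset.univ : Finset (Fin n)).powerset, (-1 : ℤ) ^ (n - J.card) *
        (((({p} : Set (Fin n → ℝ)) + ∑ j ∈ J, segment ℝ (a j) (a j + v j)) ∩
          (L : Set (Fin n → ℝ))).ncard : ℤ) =
      ((((∑ j, (segment ℝ (a j) (a j + v j) \ {a j})) + ({p} : Set (Fin n → ℝ))) ∩
        (L : Set (Fin n → ℝ))).ncard : ℤ) := by
    rw [hHcount, ← hmid]
    exact Finset.sum_congr rfl fun J _ => by rw [hNcount J]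
  refine ⟨?_, key2⟩
  rw [key2, hHcount]
  have hlat : ∀ J ∈ (Finset.univ : Finset (Fin n)).powerset, (-1 : ℤ) ^ J.card *
      latNatural L (({p} : Set (Fin n → ℝ)) + ∑ j ∈ J, segment ℝ (a j) (a j + v j)) =
      ((S.filter fun θ => (∀ j, θ j ≠ 1) ∧ ∀ j, (j ∈ J ↔ θ j ≠ 0)).card : ℤ) := by
    intro J _
    rw [latNatural, hDim J, hIcount J, ← mul_assoc, ← pow_add]
    rw [Even.neg_one_pow ⟨J.card, rfl⟩, one_mul]
  rw [Finset.sum_congr rfl hlat, hone, ← Nat.cast_inj (R := ℤ) |>.mpr hbij]
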